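/- Let p ∈ {5, 7} and let k ≥ 4 be an even integer. For every θ ∈ [0, π], the complex number F*_{k,p,2}(θ) := e^{ikθ/2}·E*_{k,p}(e^{iθ}/(2√p) − 1/2) is real (its imaginary part is zero). -/

import Mathlib

open Complex Real

/-- The Eisenstein series `E_k(z) = (1/2) Σ_{gcd(c,d)=1} (cz+d)^{-k}`. -/
noncomputable def Ek (k : ℕ) (z : ℂ) : ℂ :=
  (1 / 2) * ∑' q : ℤ × ℤ, if Int.gcd q.1 q.2 = 1 then ((q.1 : ℂ) * z + q.2) ^ (-(k : ℤ)) else 0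

/-- The Eisenstein series `E*_{k,p}(z) = (p^{k/2} E_k(pz) + E_k(z)) / (p^{k/2}+1)`
associated with the Fricke group, where `p^{k/2}` is written as `(√p)^k`. -/
noncomputable def Estar (p k : ℕ) (z : ℂ) : ℂ :=
  (((Real.sqrt p) ^ k : ℝ) * Ek k (p * z) + Ek k z) / (((Real.sqrt p) ^ k : ℝ) + 1)

private lemma zpow_scale {k : ℕ} {l A B : ℂ} (h : A = l * B) :
    A ^ (-(k:ℤ)) = l ^ (-(k:ℤ)) * B ^ (-(k:ℤ)) := by
  rw [h, mul_zpow]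

private lemma conj_Ek (k : ℕ) (z : ℂ) :
    (starRingEnd ℂ) (Ek k z) = Ek k ((starRingEnd ℂ) z) := by
  unfold Ek
  rw [map_mul, ← Complex.star_def, tsum_star]
  congr 1
  · simp
  · apply tsum_congr
    rintro ⟨c, d⟩
    simp only [Complex.star_def]
    rw [apply_ite (starRingEnd ℂ)]
    simp [map_zpow₀, map_add, map_mul, map_intCast]

theorem Fstar2_is_real (p : ℕ) (hp : p = 5 ∨ p = 7) (k : ℕ) (hk : 4 ≤ k) (hke : Even k)
    (θ : ℝ) (hθ : θ ∈ Set.Icc 0 Real.pi) :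
    (Complex.exp (Complex.I * k * θ / 2) *
      Estar p k (Complex.exp (Complex.I * θ) / (2 * (Real.sqrt p : ℂ)) - 1 / 2)).im = 0 := by
  obtain ⟨m, hm⟩ : ∃ m : ℤ, (p:ℤ) = 2*m+1 := by
    rcases hp with h | h <;> subst h <;> [exact ⟨2, rfl⟩; exact ⟨3, rfl⟩]
  have hp0 : 0 < p := by rcases hp with h | h <;> omega
  set s : ℝ := Real.sqrt p with hs_def
  have hs_pos : 0 < s := Real.sqrt_pos.mpr (by exact_mod_cast hp0)
  have hs0 : (s:ℂ) ≠ 0 := by exact_mod_cast hs_pos.ne'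
  have hs2 : (s:ℂ)^2 = (p:ℂ) := by
    norm_cast
    exact Real.sq_sqrt (by positivity)
  have hmC : (p:ℂ) = 2*(m:ℂ)+1 := by exact_mod_cast hm
  set E : ℂ := Complex.exp (Complex.I * θ) with hE_def
  set E' : ℂ := Complex.exp (-(Complex.I * θ)) with hE'_def
  have hEE' : E * E' = 1 := by rw [hE_def, hE'_def, ← Complex.exp_add]; simp
  set z : ℂ := E / (2*(s:ℂ)) - 1/2 with hz
  set zb : ℂ := E' / (2*(s:ℂ)) - 1/2 with hzb
  have hzc : (starRingEnd ℂ) z = zb := by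
    rw [hz, hzb, hE_def, hE'_def]
    rw [map_sub, map_div₀, map_div₀, ← Complex.exp_conj]
    simp [Complex.conj_ofReal, map_ofNat]
  set w : ℂ := Complex.exp (Complex.I * k * θ / 2) with hw_def
  set w' : ℂ := Complex.exp (-(Complex.I * k * θ / 2)) with hw'_def
  have hwc : (starRingEnd ℂ) w = w' := by
    rw [hw_def, hw'_def, ← Complex.exp_conj]
    congr 1
    simp only [map_div₀, map_mul, map_neg, Complex.conj_I, Complex.conj_ofReal, map_ofNat,
      map_natCast, neg_mul]
    ring
  -- gcd lemmas
  have hg1 : ∀ c d : ℤ, Int.gcd (2*d - c) (d*p - m*c) = 1 ↔ Int.gcd c d = 1 := by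
    intro c d
    rw [← Int.isCoprime_iff_gcd_eq_one, ← Int.isCoprime_iff_gcd_eq_one]
    constructor
    · rintro ⟨a, b, hab⟩
      exact ⟨-a - b*m, 2*a + b*p, by linear_combination hab⟩
    · rintro ⟨u, v, huv⟩
      exact ⟨-u*p - v*m, 2*u + v, by linear_combination ((p:ℤ)-2*m)*huv + hm⟩
  have hg2 : ∀ c d : ℤ, Int.gcd (2*d - p*c) (d - m*c) = 1 ↔ Int.gcd c d = 1 := by
    intro c d
    rw [← Int.isCoprime_iff_gcd_eq_one, ← Int.isCoprime_iff_gcd_eq_one]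
    constructor
    · rintro ⟨a, b, hab⟩
      exact ⟨-a*p - b*m, 2*a + b, by linear_combination hab⟩
    · rintro ⟨u, v, huv⟩
      exact ⟨-u - v*m, 2*u + v*p, by linear_combination ((p:ℤ)-2*m)*huv + hm⟩
  -- the reindexing equivalence
  let σ : ℤ × ℤ ≃ ℤ × ℤ :=
    { toFun := fun q => (2*q.2 - q.1, q.2*p - m*q.1)
      invFun := fun q => (2*q.2 - p*q.1, q.2 - m*q.1)
      left_inv := by
        rintro ⟨c, d⟩
        have h1 : 2*(d*p - m*c) - p*(2*d - c) = c := by linear_combination c*hm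
        have h2 : (d*p - m*c) - m*(2*d - c) = d := by linear_combination d*hm
        simp only [Prod.mk.injEq]
        exact ⟨h1, h2⟩
      right_inv := by
        rintro ⟨c, d⟩
        have h1 : 2*(d - m*c) - (2*d - p*c) = c := by linear_combination c*hm
        have h2 : (d - m*c)*p - m*(2*d - p*c) = d := by linear_combination d*hm
        simp only [Prod.mk.injEq]
        exact ⟨h1, h2⟩ }
  have hE0 : E ≠ 0 := by rw [hE_def]; exact Complex.exp_ne_zero _
  have hE'eq : E' = E⁻¹ := eq_inv_of_mul_eq_one_left (by rw [mul_comm]; exact hEE')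
  have hE'inv : E'⁻¹ = E := inv_eq_of_mul_eq_one_left hEE'
  have hpC : (p:ℂ) = (s:ℂ)^2 := hs2.symm
  have hmCs : (m:ℂ) = ((s:ℂ)^2 - 1)/2 := by
    have h : (s:ℂ)^2 = 2*(m:ℂ)+1 := by rw [hs2, hmC]
    linear_combination (-1/2 : ℂ)*h
  have hwE : w' * E^k = w := by
    rw [hw'_def, hw_def, hE_def, ← Complex.exp_nat_mul, ← Complex.exp_add]
    congr 1
    ring
  have hfact1 : w' * (E'/(s:ℂ))^(-(k:ℤ)) = w * (s:ℂ)^k := by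
    have h1 : ((E'/(s:ℂ))⁻¹) = (s:ℂ) * E := by rw [inv_div, div_eq_mul_inv, hE'inv]
    rw [zpow_neg, zpow_natCast, ← inv_pow, h1, mul_pow]
    linear_combination (s:ℂ)^k * hwE
  have hfact2 : w' * (s:ℂ)^k * ((s:ℂ)*E')^(-(k:ℤ)) = w := by
    have h1 : (((s:ℂ)*E')⁻¹) = (s:ℂ)⁻¹ * E := by rw [mul_inv, hE'inv]
    rw [zpow_neg, zpow_natCast, ← inv_pow, h1, mul_pow]
    have h3 : (s:ℂ)^k * ((s:ℂ)⁻¹)^k = 1 := by rw [← mul_pow, mul_inv_cancel₀ hs0, one_pow]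
    calc w' * (s:ℂ)^k * (((s:ℂ)⁻¹)^k * E^k) = (w' * E^k) * ((s:ℂ)^k * ((s:ℂ)⁻¹)^k) := by ring
      _ = w := by rw [hwE, h3, mul_one]
  have hC : (s:ℂ)^2*(2*z+1)*(2*zb+1) = 1 := by
    rw [hz, hzb]
    field_simp
    linear_combination hEE'
  have hE's : E'/(s:ℂ) = 2*zb+1 := by
    rw [hzb]; field_simp; ring
  have hsE' : (s:ℂ)*E' = (s:ℂ)^2*(2*zb+1) := by
    rw [hzb]; field_simp; ring
  have hlin1 : ∀ c d : ℤ, (c:ℂ)*zb + (d:ℂ)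
      = (E'/(s:ℂ)) * (((2*d - c : ℤ):ℂ)*((p:ℂ)*z) + ((d*p - m*c : ℤ):ℂ)) := by
    intro c d
    push_cast
    rw [hpC, hmCs, hE's]
    linear_combination (-(2*(d:ℂ)-(c:ℂ))/2) * hC
  have hlin2 : ∀ c d : ℤ, (c:ℂ)*((p:ℂ)*zb) + (d:ℂ)
      = ((s:ℂ)*E') * (((2*d - p*c : ℤ):ℂ)*z + ((d - m*c : ℤ):ℂ)) := by
    intro c d
    push_cast
    rw [hpC, hmCs, hsE']
    linear_combination (-(2*(d:ℂ)-(s:ℂ)^2*(c:ℂ))/2) * hC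
  have key1 : w' * Ek k zb = w * (s:ℂ)^k * Ek k ((p:ℂ)*z) := by
    have hS : ∑' q : ℤ×ℤ, w' * (if Int.gcd q.1 q.2 = 1 then ((q.1:ℂ)*zb + (q.2:ℂ))^(-(k:ℤ)) else 0)
        = ∑' q : ℤ×ℤ, (w * (s:ℂ)^k) *
            (if Int.gcd q.1 q.2 = 1 then ((q.1:ℂ)*((p:ℂ)*z) + (q.2:ℂ))^(-(k:ℤ)) else 0) := by
      rw [← Equiv.tsum_eq σ (fun q : ℤ×ℤ => (w * (s:ℂ)^k) *
            (if Int.gcd q.1 q.2 = 1 then ((q.1:ℂ)*((p:ℂ)*z) + (q.2:ℂ))^(-(k:ℤ)) else 0))]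
      apply tsum_congr
      rintro ⟨c, d⟩
      simp only [σ, Equiv.coe_fn_mk]
      simp only [hg1 c d]
      split_ifs with h
      · rw [zpow_scale (hlin1 c d), ← mul_assoc, hfact1]
      · simp
    unfold Ek
    calc w' * (1/2 * ∑' q : ℤ×ℤ,
            (if Int.gcd q.1 q.2 = 1 then ((q.1:ℂ)*zb + (q.2:ℂ))^(-(k:ℤ)) else 0))
        = 1/2 * ∑' q : ℤ×ℤ, w' *
            (if Int.gcd q.1 q.2 = 1 then ((q.1:ℂ)*zb + (q.2:ℂ))^(-(k:ℤ)) else 0) := by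
          rw [tsum_mul_left]; ring
      _ = 1/2 * ∑' q : ℤ×ℤ, (w * (s:ℂ)^k) *
            (if Int.gcd q.1 q.2 = 1 then ((q.1:ℂ)*((p:ℂ)*z) + (q.2:ℂ))^(-(k:ℤ)) else 0) := by
          rw [hS]
      _ = w * (s:ℂ)^k * (1/2 * ∑' q : ℤ×ℤ,
            (if Int.gcd q.1 q.2 = 1 then ((q.1:ℂ)*((p:ℂ)*z) + (q.2:ℂ))^(-(k:ℤ)) else 0)) := by
          rw [tsum_mul_left]; ring
  have key2 : w' * (s:ℂ)^k * Ek k ((p:ℂ)*zb) = w * Ek k z := by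
    have hS : ∑' q : ℤ×ℤ, (w' * (s:ℂ)^k) *
            (if Int.gcd q.1 q.2 = 1 then ((q.1:ℂ)*((p:ℂ)*zb) + (q.2:ℂ))^(-(k:ℤ)) else 0)
        = ∑' q : ℤ×ℤ, w *
            (if Int.gcd q.1 q.2 = 1 then ((q.1:ℂ)*z + (q.2:ℂ))^(-(k:ℤ)) else 0) := by
      rw [← Equiv.tsum_eq σ.symm (fun q : ℤ×ℤ => w *
            (if Int.gcd q.1 q.2 = 1 then ((q.1:ℂ)*z + (q.2:ℂ))^(-(k:ℤ)) else 0))]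
      apply tsum_congr
      rintro ⟨c, d⟩
      simp only [σ, Equiv.coe_fn_symm_mk]
      simp only [hg2 c d]
      split_ifs with h
      · rw [zpow_scale (hlin2 c d), ← mul_assoc, hfact2]
      · simp
    unfold Ek
    calc w' * (s:ℂ)^k * (1/2 * ∑' q : ℤ×ℤ,
            (if Int.gcd q.1 q.2 = 1 then ((q.1:ℂ)*((p:ℂ)*zb) + (q.2:ℂ))^(-(k:ℤ)) else 0))
        = 1/2 * ∑' q : ℤ×ℤ, (w' * (s:ℂ)^k) *
            (if Int.gcd q.1 q.2 = 1 then ((q.1:ℂ)*((p:ℂ)*zb) + (q.2:ℂ))^(-(k:ℤ)) else 0) := by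
          rw [tsum_mul_left]; ring
      _ = 1/2 * ∑' q : ℤ×ℤ, w *
            (if Int.gcd q.1 q.2 = 1 then ((q.1:ℂ)*z + (q.2:ℂ))^(-(k:ℤ)) else 0) := by
          rw [hS]
      _ = w * (1/2 * ∑' q : ℤ×ℤ,
            (if Int.gcd q.1 q.2 = 1 then ((q.1:ℂ)*z + (q.2:ℂ))^(-(k:ℤ)) else 0)) := by
          rw [tsum_mul_left]; ring
  rw [← Complex.conj_eq_iff_im]
  unfold Estar
  have hcast : ((s^k : ℝ) : ℂ) = (s:ℂ)^k := by push_cast; ring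
  rw [hcast, map_mul, hwc, map_div₀, map_add, map_mul, map_pow, Complex.conj_ofReal,
    conj_Ek, conj_Ek, map_mul, Complex.conj_natCast, hzc, map_add, map_pow,
    Complex.conj_ofReal, map_one]
  rw [← mul_div_assoc, ← mul_div_assoc]
  congr 1
  linear_combination key1 + key2
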